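/- Let T = (V,E) be a finite tree and let (c_0, c_1, …, c_{N-1}) be an Euler tour representation of T, i.e., a cyclic sequence listing exactly once each self-loop (v,v) for v ∈ V and each directed edge (u,v) and (v,u) for every tree edge {u,v} ∈ E, such that for every index i, the head of c_i equals the tail of c_{(i+1) mod N}. Then for every contiguous (cyclic) interval J of this sequence, the set E_J = {{u,v} ∈ E : (u,v) ∈ J or (v,u) ∈ J} of tree edges appearing in J spans a connected subgraph of T; consequently, if E_J is nonempty, the subgraph (V(E_J), E_J) is a subtree of T and |E_J| = |V(E_J)| - 1, where V(E_J) is the set of endpoints of edges in E_J. -/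

import Mathlib

open SimpleGraph

private lemma aux_induce_reach {V : Type*} (G : SimpleGraph V) (S : Set V)
    (hS : ∀ a b, G.Adj a b → a ∈ S ∧ b ∈ S) :
    ∀ {u v : V} (_ : G.Walk u v) (hu : u ∈ S) (hv : v ∈ S),
      (G.induce S).Reachable ⟨u, hu⟩ ⟨v, hv⟩ := by
  intro u v p
  induction p with
  | nil => intro hu hv; exact Reachable.refl _
  | @cons a b d h q ih =>
    intro hu hv
    have hb : b ∈ S := (hS _ _ h).2
    exact (Adj.reachable (by simpa using h : (G.induce S).Adj ⟨a, hu⟩ ⟨b, hb⟩)).trans (ih hb hv)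


/-- Let `T = (V,E)` be a finite tree and `(c_0, …, c_{N-1})` an Euler tour
representation of `T`: a cyclic sequence (here an `N`-periodic function `c : ℕ → V × V`)
listing exactly once each self-loop `(v,v)` and each directed version `(u,v)`, `(v,u)` of
every tree edge `{u,v}`, consecutive arcs meeting head-to-tail. Then for every contiguous
cyclic interval `J` (starting at position `j`, of length `len ≤ N`), the set `E_J` of tree
edges appearing in `J` spans a connected subgraph of `T`; consequently, if `E_J ≠ ∅`, the
subgraph `(V(E_J), E_J)` is a subtree of `T` and `|E_J| = |V(E_J)| - 1`. -/
theorem stmt_16 {V : Type*} [Fintype V] [DecidableEq V]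
    (T : SimpleGraph V) (hT : T.IsTree)
    (N : ℕ) (c : ℕ → V × V)
    (arcs : Set (V × V))
    (harcs : arcs = {q : V × V | q.1 = q.2} ∪ {q : V × V | T.Adj q.1 q.2})
    (hper : ∀ i, c (i + N) = c i)
    (hmem : ∀ i, c i ∈ arcs)
    (hinj : ∀ i < N, ∀ j < N, c i = c j → i = j)
    (hsurj : ∀ q ∈ arcs, ∃ i < N, c i = q)
    (hchain : ∀ i, (c i).2 = (c (i + 1)).1)
    (j len : ℕ) (hlen : len ≤ N)
    (EJ : Set (Sym2 V))
    (hEJ : EJ = {e | ∃ k < len,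
      e = s((c (j + k)).1, (c (j + k)).2) ∧ (c (j + k)).1 ≠ (c (j + k)).2})
    (VJ : Set V) (hVJ : VJ = {v | ∃ e ∈ EJ, v ∈ e}) :
    EJ ⊆ T.edgeSet ∧
    (EJ.Nonempty →
      ((SimpleGraph.fromEdgeSet EJ).induce VJ).Connected ∧
      EJ.ncard = VJ.ncard - 1) := by
  classical
  set G := SimpleGraph.fromEdgeSet EJ with hG
  -- EJ ⊆ T.edgeSet
  have hsub : EJ ⊆ T.edgeSet := by
    intro e he
    rw [hEJ] at he
    obtain ⟨k, hk, rfl, hne⟩ := he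
    have h1 := hmem (j + k)
    rw [harcs] at h1
    rcases h1 with h1 | h1
    · exact absurd h1 hne
    · exact h1
  refine ⟨hsub, fun hne => ?_⟩
  -- edge set of G
  have hGedge : G.edgeSet = EJ := by
    rw [hG, edgeSet_fromEdgeSet]
    ext e
    refine ⟨fun h => h.1, fun h => ⟨h, ?_⟩⟩
    intro hdiag
    rw [hEJ] at h
    obtain ⟨k, hk, rfl, hne⟩ := h
    exact hne (Sym2.mk_isDiag_iff.1 hdiag)
  -- G ≤ T
  have hGT : G ≤ T := by
    intro a b hab
    rw [hG, fromEdgeSet_adj] at hab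
    exact (mem_edgeSet T).1 (hsub hab.1)
  -- endpoints of G-edges lie in VJ
  have hend : ∀ a b, G.Adj a b → a ∈ VJ ∧ b ∈ VJ := by
    intro a b hab
    rw [hG, fromEdgeSet_adj] at hab
    constructor
    · rw [hVJ]; exact ⟨s(a, b), hab.1, Sym2.mem_mk_left a b⟩
    · rw [hVJ]; exact ⟨s(a, b), hab.1, Sym2.mem_mk_right a b⟩
  -- reachability along the tour
  have hreach : ∀ k ≤ len, G.Reachable ((c j).1) ((c (j + k)).1) := by
    intro k hk
    induction k with
    | zero => exact Reachable.refl _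
    | succ m ih =>
      have hm : m ≤ len := Nat.le_of_succ_le hk
      have h2 : (c (j + m)).2 = (c (j + (m + 1))).1 := by
        rw [← Nat.add_assoc]; exact hchain (j + m)
      by_cases hd : (c (j + m)).1 = (c (j + m)).2
      · have : (c (j + m)).1 = (c (j + (m + 1))).1 := hd.trans h2
        exact this ▸ ih hm
      · have hE : s((c (j + m)).1, (c (j + m)).2) ∈ EJ := by
          rw [hEJ]; exact ⟨m, Nat.lt_of_succ_le hk, rfl, hd⟩
        have hadj : G.Adj ((c (j + m)).1) ((c (j + m)).2) := by
          rw [hG, fromEdgeSet_adj]; exact ⟨hE, hd⟩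
        exact (ih hm).trans (h2 ▸ hadj.reachable)
  -- every vertex of VJ is reachable from (c j).1
  have hreachVJ : ∀ v ∈ VJ, G.Reachable ((c j).1) v := by
    intro v hv
    rw [hVJ] at hv
    obtain ⟨e, heEJ, hve⟩ := hv
    have heEJ' := heEJ
    rw [hEJ] at heEJ'
    obtain ⟨k, hk, rfl, hne⟩ := heEJ'
    rcases Sym2.mem_iff.1 hve with h | h
    · exact h ▸ hreach k (le_of_lt hk)
    · have h2 : (c (j + k)).2 = (c (j + (k + 1))).1 := by
        rw [← Nat.add_assoc]; exact hchain (j + k)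
      exact h ▸ h2 ▸ hreach (k + 1) (Nat.succ_le_of_lt hk)
  -- connectedness of the induced graph
  have hconn : (G.induce VJ).Connected := by
    have hVJne : VJ.Nonempty := by
      obtain ⟨e, he⟩ := hne
      have he' := he
      rw [hEJ] at he'
      obtain ⟨k, hk, rfl, hne'⟩ := he'
      exact ⟨(c (j + k)).1, by rw [hVJ]; exact ⟨_, he, Sym2.mem_mk_left _ _⟩⟩
    rw [connected_iff]
    refine ⟨?_, ?_⟩
    · rintro ⟨u, hu⟩ ⟨v, hv⟩
      have h1 : G.Reachable u v := ((hreachVJ u hu).symm).trans (hreachVJ v hv)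
      obtain ⟨p⟩ := h1
      exact aux_induce_reach G VJ hend p hu hv
    · exact ⟨⟨hVJne.choose, hVJne.choose_spec⟩⟩
  refine ⟨hconn, ?_⟩
  -- the induced graph is a tree
  have hacyc : (G.induce VJ).IsAcyclic := by
    intro v w hw
    have h1 : ((w.map (SimpleGraph.Embedding.induce (G := G) VJ).toHom).mapLe hGT).IsCycle :=
      ((hw.map (SimpleGraph.Embedding.induce (G := G) VJ).injective)).mapLe hGT
    exact hT.IsAcyclic _ h1
  have htree : (G.induce VJ).IsTree := ⟨hconn, hacyc⟩
  haveI : Fintype ↥VJ := Set.Finite.fintype (Set.toFinite VJ)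
  haveI : Fintype ((G.induce VJ).edgeSet) := Fintype.ofFinite _
  have hcard := htree.card_edgeFinset
  -- relate EJ to the edge set of the induced graph
  have himg : Sym2.map (Subtype.val : ↥VJ → V) '' (G.induce VJ).edgeSet = EJ := by
    ext e
    constructor
    · rintro ⟨e', he', rfl⟩
      induction e' with
      | _ a b =>
        have : (G.induce VJ).Adj a b := he'
        have hGab : G.Adj a.1 b.1 := by simpa using this
        rw [← hGedge]
        exact hGab
    · intro he
      have he' := he
      rw [hEJ] at he'
      obtain ⟨k, hk, rfl, hne'⟩ := he'
      have hE : s((c (j + k)).1, (c (j + k)).2) ∈ EJ := he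
      have hadj : G.Adj ((c (j + k)).1) ((c (j + k)).2) := by
        rw [hG, fromEdgeSet_adj]; exact ⟨hE, hne'⟩
      have h1 := hend _ _ hadj
      refine ⟨s((⟨_, h1.1⟩ : ↥VJ), (⟨_, h1.2⟩ : ↥VJ)), ?_, rfl⟩
      exact (by simpa using hadj : (G.induce VJ).Adj ⟨_, h1.1⟩ ⟨_, h1.2⟩)
  have hinjmap : Function.Injective (Sym2.map (Subtype.val : ↥VJ → V)) :=
    Sym2.map.injective Subtype.val_injective
  have hEJcard : EJ.ncard = ((G.induce VJ).edgeSet).ncard := by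
    rw [← himg, Set.ncard_image_of_injective _ hinjmap]
  have hVJcard : VJ.ncard = Fintype.card ↥VJ := by
    rw [← Nat.card_coe_set_eq, Nat.card_eq_fintype_card]
  have hecard : ((G.induce VJ).edgeSet).ncard = (G.induce VJ).edgeFinset.card := by
    rw [Set.ncard_eq_toFinset_card']; rfl
  omega
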